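/- arXiv:1205.1100 — 3 statements merged into one kernel-verified Lean document; each statement's English description precedes it below -/
import Mathlib

section
/- Let n ≥ 1, let C ⊆ ℝ^n be a nonempty open convex cone (an open convex set stable under multiplication by positive real numbers), let μ_1, …, μ_N ∈ ℝ^n be such that μ_j − μ_l ∉ 2πℤ^n for all j ≠ l, and let p_1, …, p_N : ℝ^n → ℂ be polynomial functions (polynomials in the n coordinates with complex coefficients). If Σ_{j=1}^N exp(i⟨μ_j, T⟩) · p_j(T) = 0 for every T ∈ ℤ^n ∩ C, where ⟨·,·⟩ is the standard inner product on ℝ^n, then p_j = 0 for every j. -/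
open scoped BigOperators

namespace Stmt3Aux
open MvPolynomial

variable {n : ℕ}

noncomputable def chi (ν : Fin n → ℝ) (m : Fin n → ℤ) : ℂ :=
  Complex.exp (Complex.I * ((∑ i, ν i * (m i : ℝ) : ℝ) : ℂ))

noncomputable def evc (m : Fin n → ℤ) : Fin n → ℂ := fun i => ((m i : ℝ) : ℂ)

def delta (i : Fin n) : Fin n → ℤ := fun k => if k = i then 1 else 0

noncomputable def EF (i : Fin n) (c : ℂ) (F : (Fin n → ℤ) → ℂ) : (Fin n → ℤ) → ℂ :=
  fun m => F (m + delta i) - c * F m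

noncomputable def EFs (L : List (Fin n × ℂ)) (F : (Fin n → ℤ) → ℂ) : (Fin n → ℤ) → ℂ :=
  L.foldr (fun s G => EF s.1 s.2 G) F

noncomputable def shiftP (i : Fin n) (p : MvPolynomial (Fin n) ℂ) : MvPolynomial (Fin n) ℂ :=
  aeval (fun k => X k + if k = i then 1 else 0) p

noncomputable def EP (i : Fin n) (a c : ℂ) (p : MvPolynomial (Fin n) ℂ) : MvPolynomial (Fin n) ℂ :=
  C a * shiftP i p - C c * p

noncomputable def EPs (ν : Fin n → ℝ) (L : List (Fin n × ℂ)) (p : MvPolynomial (Fin n) ℂ) :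
    MvPolynomial (Fin n) ℂ :=
  L.foldr (fun s q => EP s.1 (Complex.exp (Complex.I * (ν s.1 : ℂ))) s.2 q) p

lemma EFs_cons (s : Fin n × ℂ) (L : List (Fin n × ℂ)) (F : (Fin n → ℤ) → ℂ) :
    EFs (s :: L) F = EF s.1 s.2 (EFs L F) := rfl

lemma EPs_cons (ν : Fin n → ℝ) (s : Fin n × ℂ) (L : List (Fin n × ℂ)) (p : MvPolynomial (Fin n) ℂ) :
    EPs ν (s :: L) p = EP s.1 (Complex.exp (Complex.I * (ν s.1 : ℂ))) s.2 (EPs ν L p) := rfl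

lemma chi_add_delta (ν : Fin n → ℝ) (m : Fin n → ℤ) (i : Fin n) :
    chi ν (m + delta i) = Complex.exp (Complex.I * (ν i : ℂ)) * chi ν m := by
  rw [chi, chi, ← Complex.exp_add]
  congr 1
  have h1 : (∑ k, ν k * (((m + delta i) k : ℤ) : ℝ)) = ν i + ∑ k, ν k * ((m k : ℤ) : ℝ) := by
    have h2 : ∀ k : Fin n, ν k * (((m + delta i) k : ℤ) : ℝ)
        = (if k = i then ν k else 0) + ν k * ((m k : ℤ) : ℝ) := by
      intro k
      by_cases hk : k = i <;> simp [delta, Pi.add_apply, hk] <;> ring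
    rw [Finset.sum_congr rfl fun k _ => h2 k, Finset.sum_add_distrib,
      Finset.sum_ite_eq' Finset.univ i fun k => ν k]
    simp
  rw [h1]
  push_cast
  ring

lemma aeval_apply_eq_eval (x : Fin n → ℂ) (p : MvPolynomial (Fin n) ℂ) :
    aeval x p = eval x p := by
  exact DFunLike.congr_fun (MvPolynomial.coe_aeval_eq_eval x) p

lemma eval_shiftP (x : Fin n → ℂ) (i : Fin n) (p : MvPolynomial (Fin n) ℂ) :
    eval x (shiftP i p) = eval (fun k => x k + if k = i then 1 else 0) p := by
  rw [← aeval_apply_eq_eval, ← aeval_apply_eq_eval, shiftP]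
  have := MvPolynomial.comp_aeval (f := fun k : Fin n => X k + if k = i then (1 : MvPolynomial (Fin n) ℂ) else 0)
    (φ := (aeval x : MvPolynomial (Fin n) ℂ →ₐ[ℂ] ℂ))
  have h2 := DFunLike.congr_fun this p
  simp only [AlgHom.comp_apply] at h2
  have h3 : (fun k => (aeval x) (X k + if k = i then (1 : MvPolynomial (Fin n) ℂ) else 0))
      = fun k => x k + if k = i then 1 else 0 := by
    funext k
    by_cases hk : k = i <;> simp [hk]
  rw [h2, h3]

lemma evc_add_delta (m : Fin n → ℤ) (i : Fin n) :
    evc (m + delta i) = fun k => evc m k + if k = i then 1 else 0 := by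
  funext k
  by_cases hk : k = i <;> simp [evc, delta, hk]

lemma EF_step (i : Fin n) (c : ℂ) (ν : Fin n → ℝ) (p : MvPolynomial (Fin n) ℂ) (m : Fin n → ℤ) :
    EF i c (fun m' => chi ν m' * eval (evc m') p) m
      = chi ν m * eval (evc m) (EP i (Complex.exp (Complex.I * (ν i : ℂ))) c p) := by
  simp only [EF, EP, chi_add_delta, map_sub, map_mul, eval_C]
  rw [evc_add_delta, ← eval_shiftP]
  ring

lemma EFs_char (ν : Fin n → ℝ) (L : List (Fin n × ℂ)) (p : MvPolynomial (Fin n) ℂ)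
    (m : Fin n → ℤ) :
    EFs L (fun m' => chi ν m' * eval (evc m') p) m = chi ν m * eval (evc m) (EPs ν L p) := by
  induction L generalizing m with
  | nil => rfl
  | cons s L ih =>
      rw [EFs_cons, EPs_cons, ← EF_step]
      simp only [EF]
      rw [ih, ih]

lemma EFs_sum {J : Type*} (s : Finset J) (G : J → (Fin n → ℤ) → ℂ) (L : List (Fin n × ℂ))
    (m : Fin n → ℤ) :
    EFs L (fun m' => ∑ j ∈ s, G j m') m = ∑ j ∈ s, EFs L (G j) m := by
  induction L generalizing m with
  | nil => rfl
  | cons t L ih =>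
      rw [EFs_cons]
      simp only [EF]
      rw [show (EFs L fun m' => ∑ j ∈ s, G j m') = fun m' => ∑ j ∈ s, EFs L (G j) m' from funext fun m' => ih m']
      rw [Finset.mul_sum, ← Finset.sum_sub_distrib]
      rfl



lemma shiftP_sum {α : Type*} (i : Fin n) (s : Finset α) (f : α → MvPolynomial (Fin n) ℂ) :
    shiftP i (∑ v ∈ s, f v) = ∑ v ∈ s, shiftP i (f v) :=
  map_sum (aeval fun k => X k + if k = i then 1 else 0) f s

lemma shiftP_monomial_fixed (i : Fin n) (w : Fin n →₀ ℕ) (c : ℂ) (hw : w i = 0) :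
    shiftP i (monomial w c) = monomial w c := by
  rw [monomial_eq, shiftP, map_mul, aeval_C]
  rw [map_finsuppProd]
  have : (w.prod fun k e => (aeval fun k => X k + if k = i then (1:MvPolynomial (Fin n) ℂ) else 0) ((X k : MvPolynomial (Fin n) ℂ) ^ e))
      = w.prod fun k e => X k ^ e := by
    apply Finsupp.prod_congr
    intro k hk
    have hki : k ≠ i := by
      rintro rfl
      exact (Finsupp.mem_support_iff.mp hk) hw
    simp [hki]
  rw [this]
  simp [algebraMap_eq]

lemma shiftP_monomial (i : Fin n) (v : Fin n →₀ ℕ) (c : ℂ) :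
    shiftP i (monomial v c)
      = monomial (v.erase i) c * (X i + 1) ^ (v i) := by
  conv_lhs => rw [← Finsupp.erase_add_single i v, monomial_add_single]
  rw [shiftP, map_mul, map_pow, aeval_X, if_pos rfl]
  rw [← shiftP]
  rw [shiftP_monomial_fixed i _ c (by simp [Finsupp.erase_apply])]

lemma sum_erase_add (v : Fin n →₀ ℕ) (i : Fin n) :
    (v.erase i).sum (fun _ e => e) + v i = v.sum (fun _ e => e) := by
  conv_rhs => rw [← Finsupp.erase_add_single i v]
  rw [Finsupp.sum_add_index' (fun _ => rfl) (fun _ _ _ => rfl)]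
  rw [Finsupp.sum_single_index rfl]

lemma totalDegree_delta_monomial_le (i : Fin n) (v : Fin n →₀ ℕ) (c : ℂ) (d : ℕ)
    (hv : v.sum (fun _ e => e) ≤ d + 1) :
    (shiftP i (monomial v c) - monomial v c).totalDegree ≤ d := by
  rw [shiftP_monomial]
  conv_lhs => rw [show (monomial v c : MvPolynomial (Fin n) ℂ)
    = monomial (v.erase i) c * X i ^ (v i) by
      conv_lhs => rw [← Finsupp.erase_add_single i v, monomial_add_single]]
  rw [← mul_sub]
  rcases Nat.eq_zero_or_pos (v i) with he | he
  · simp [he]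
  · have hpow : ((X i + 1 : MvPolynomial (Fin n) ℂ)) ^ (v i) - X i ^ (v i)
        = ∑ t ∈ Finset.range (v i), X i ^ t * (1:MvPolynomial (Fin n) ℂ) ^ (v i - t) * (Nat.choose (v i) t : MvPolynomial (Fin n) ℂ) := by
      rw [add_pow]
      rw [Finset.sum_range_succ]
      simp
    refine le_trans (totalDegree_mul _ _) ?_
    have h1 : (monomial (v.erase i) c).totalDegree ≤ (v.erase i).sum fun _ e => e :=
      totalDegree_monomial_le _ _
    have h2 : ((X i + 1 : MvPolynomial (Fin n) ℂ) ^ (v i) - X i ^ (v i)).totalDegree ≤ v i - 1 := by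
      rw [hpow]
      refine le_trans (totalDegree_finset_sum _ _) ?_
      apply Finset.sup_le
      intro t ht
      refine le_trans (totalDegree_mul _ _) ?_
      have : ((Nat.choose (v i) t : MvPolynomial (Fin n) ℂ)).totalDegree = 0 := by
        rw [← map_natCast (C : ℂ →+* MvPolynomial (Fin n) ℂ)]
        exact totalDegree_C _
      rw [this]
      refine le_trans (add_le_add_left (totalDegree_mul _ _) 0) ?_
      simp only [one_pow, totalDegree_one, add_zero]
      refine le_trans (add_le_add_left (totalDegree_X_pow _ _).le 0) ?_
      simp only [add_zero]
      have := Finset.mem_range.mp ht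
      omega
    have := sum_erase_add v i
    omega

lemma totalDegree_delta_le (i : Fin n) (q : MvPolynomial (Fin n) ℂ) (d : ℕ)
    (hq : q.totalDegree ≤ d + 1) :
    (shiftP i q - q).totalDegree ≤ d := by
  conv_lhs => rw [q.as_sum]
  rw [shiftP_sum, ← Finset.sum_sub_distrib]
  refine le_trans (totalDegree_finset_sum _ _) ?_
  apply Finset.sup_le
  intro v hv
  exact totalDegree_delta_monomial_le i v _ d (le_trans (le_totalDegree hv) hq)

lemma shiftP_eq_of_deg_zero (i : Fin n) (q : MvPolynomial (Fin n) ℂ) (hq : q.totalDegree = 0) :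
    shiftP i q = q := by
  conv_lhs => rw [q.as_sum]
  rw [shiftP_sum]
  conv_rhs => rw [q.as_sum]
  apply Finset.sum_congr rfl
  intro v hv
  apply shiftP_monomial_fixed
  exact (totalDegree_eq_zero_iff (Fin n) q).mp hq v hv i

lemma totalDegree_shiftP_le (i : Fin n) (q : MvPolynomial (Fin n) ℂ) :
    (shiftP i q).totalDegree ≤ q.totalDegree := by
  rcases Nat.eq_zero_or_pos q.totalDegree with h | h
  · rw [shiftP_eq_of_deg_zero i q h]
  · have : shiftP i q = (shiftP i q - q) + q := by ring
    rw [this]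
    refine le_trans (totalDegree_add _ _) ?_
    have := totalDegree_delta_le i q (q.totalDegree - 1) (by omega)
    omega

lemma totalDegree_EP_le (i : Fin n) (a c : ℂ) (q : MvPolynomial (Fin n) ℂ) :
    (EP i a c q).totalDegree ≤ q.totalDegree := by
  rw [EP, sub_eq_add_neg]
  refine le_trans (totalDegree_add _ _) ?_
  rw [totalDegree_neg]
  have h1 : (C a * shiftP i q).totalDegree ≤ q.totalDegree := by
    refine le_trans (totalDegree_mul _ _) ?_
    rw [totalDegree_C]
    simpa using totalDegree_shiftP_le i q
  have h2 : (C c * q).totalDegree ≤ q.totalDegree := by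
    refine le_trans (totalDegree_mul _ _) ?_
    simp [totalDegree_C]
  omega

lemma EP_C_mul (i : Fin n) (a c b : ℂ) (q : MvPolynomial (Fin n) ℂ) :
    EP i a c (C b * q) = C b * EP i a c q := by
  rw [EP, EP, shiftP, map_mul, aeval_C, ← shiftP]
  rw [algebraMap_eq]
  ring

lemma EP_iterate_C_mul (i : Fin n) (a c b : ℂ) (k : ℕ) (q : MvPolynomial (Fin n) ℂ) :
    (EP i a c)^[k] (C b * q) = C b * (EP i a c)^[k] q := by
  induction k generalizing q with
  | zero => rfl
  | succ k ih =>
      rw [Function.iterate_succ_apply, Function.iterate_succ_apply, EP_C_mul, ih]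

lemma EP_kill (i : Fin n) (a : ℂ) :
    ∀ (d : ℕ) (q : MvPolynomial (Fin n) ℂ), q.totalDegree ≤ d → (EP i a a)^[d+1] q = 0 := by
  intro d
  induction d with
  | zero =>
      intro q hq
      rw [Function.iterate_one, EP, shiftP_eq_of_deg_zero i q (Nat.le_zero.mp hq)]
      ring
  | succ d ih =>
      intro q hq
      rw [Function.iterate_succ_apply]
      have hEP : EP i a a q = C a * (shiftP i q - q) := by rw [EP]; ring
      rw [hEP, EP_iterate_C_mul, ih _ (totalDegree_delta_le i q d hq), mul_zero]





noncomputable def linePoly (i : Fin n) (x : Fin n → ℂ) (p : MvPolynomial (Fin n) ℂ) :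
    Polynomial ℂ :=
  aeval (fun k => if k = i then Polynomial.X else Polynomial.C (x k)) p

lemma eval_linePoly (i : Fin n) (x : Fin n → ℂ) (p : MvPolynomial (Fin n) ℂ) (y : ℂ) :
    (linePoly i x p).eval y = eval (Function.update x i y) p := by
  rw [linePoly, ← aeval_apply_eq_eval, ← Polynomial.coe_aeval_eq_eval]
  have h1 := DFunLike.congr_fun (MvPolynomial.comp_aeval
    (f := fun k : Fin n => if k = i then Polynomial.X else Polynomial.C (x k))
    (φ := (Polynomial.aeval y : Polynomial ℂ →ₐ[ℂ] ℂ))) p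
  simp only [AlgHom.comp_apply] at h1
  have h3 : (fun k => (Polynomial.aeval y) (if k = i then Polynomial.X else Polynomial.C (x k)))
      = Function.update x i y := by
    funext k
    by_cases hk : k = i <;> simp [hk, Function.update_apply]
  rw [h1, h3]

lemma linePoly_shiftP (i : Fin n) (x : Fin n → ℂ) (p : MvPolynomial (Fin n) ℂ) :
    linePoly i x (shiftP i p) = (linePoly i x p).comp (Polynomial.X + Polynomial.C 1) := by
  rw [linePoly, shiftP, Polynomial.comp_eq_aeval, linePoly]
  have h1 := DFunLike.congr_fun (MvPolynomial.comp_aeval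
    (f := fun k : Fin n => X k + if k = i then (1 : MvPolynomial (Fin n) ℂ) else 0)
    (φ := (aeval (fun k : Fin n => if k = i then Polynomial.X else Polynomial.C (x k)) :
      MvPolynomial (Fin n) ℂ →ₐ[ℂ] Polynomial ℂ))) p
  simp only [AlgHom.comp_apply] at h1
  rw [h1]
  have h2 := DFunLike.congr_fun (MvPolynomial.comp_aeval
    (f := fun k : Fin n => if k = i then Polynomial.X else Polynomial.C (x k))
    (φ := (Polynomial.aeval (Polynomial.X + Polynomial.C 1) : Polynomial ℂ →ₐ[ℂ] Polynomial ℂ))) p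
  simp only [AlgHom.comp_apply] at h2
  rw [h2]
  have h3 : (fun k => (aeval fun k' => if k' = i then Polynomial.X else Polynomial.C (x k'))
        ((X k : MvPolynomial (Fin n) ℂ) + if k = i then 1 else 0))
      = fun k => (Polynomial.aeval (Polynomial.X + Polynomial.C 1))
        (if k = i then Polynomial.X else Polynomial.C (x k)) := by
    funext k
    by_cases hk : k = i <;> simp [hk]
  rw [h3]

lemma linePoly_C_mul (i : Fin n) (x : Fin n → ℂ) (b : ℂ) (p : MvPolynomial (Fin n) ℂ) :
    linePoly i x (C b * p) = Polynomial.C b * linePoly i x p := by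
  rw [linePoly, map_mul, aeval_C, linePoly]
  simp [Polynomial.algebraMap_eq]

lemma EP_inj (i : Fin n) (a c : ℂ) (hac : a ≠ c) (p : MvPolynomial (Fin n) ℂ)
    (hp : EP i a c p = 0) : p = 0 := by
  have key : ∀ x : Fin n → ℂ, linePoly i x p = 0 := by
    intro x
    have h1 : C a * shiftP i p = C c * p := by
      rw [EP, sub_eq_zero] at hp; exact hp
    have h2 : Polynomial.C a * ((linePoly i x p).comp (Polynomial.X + Polynomial.C 1))
        = Polynomial.C c * linePoly i x p := by
      rw [← linePoly_shiftP, ← linePoly_C_mul, ← linePoly_C_mul, h1]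
    by_contra hr
    set r := linePoly i x p with hrdef
    have hlc : a * r.leadingCoeff = c * r.leadingCoeff := by
      have hd : (Polynomial.X + Polynomial.C (1:ℂ)).natDegree = 1 :=
        Polynomial.natDegree_X_add_C 1
      have hm : (Polynomial.X + Polynomial.C (1:ℂ)).leadingCoeff = 1 :=
        (Polynomial.monic_X_add_C (1:ℂ)).leadingCoeff
      have e1 : (Polynomial.C a * (r.comp (Polynomial.X + Polynomial.C 1))).leadingCoeff
          = a * r.leadingCoeff := by
        rw [Polynomial.leadingCoeff_mul, Polynomial.leadingCoeff_C,
          Polynomial.leadingCoeff_comp (by rw [hd]; norm_num), hm, one_pow, mul_one]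
      have e2 : (Polynomial.C c * r).leadingCoeff = c * r.leadingCoeff := by
        rw [Polynomial.leadingCoeff_mul, Polynomial.leadingCoeff_C]
      rw [← e1, ← e2, h2]
    have : r.leadingCoeff = 0 := by
      have := sub_eq_zero.mpr hlc
      rw [← sub_mul] at this
      rcases mul_eq_zero.mp this with h | h
      · exact absurd (sub_eq_zero.mp h) hac
      · exact h
    exact hr (Polynomial.leadingCoeff_eq_zero.mp this)
  have heval : ∀ x : Fin n → ℂ, eval x p = 0 := by
    intro x
    have := eval_linePoly i x p (x i)
    rw [key x, Function.update_eq_self] at this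
    simpa using this.symm
  exact MvPolynomial.funext (fun x => by rw [heval x, map_zero])

lemma vanish_lattice (p : MvPolynomial (Fin n) ℂ)
    (h : ∀ m : Fin n → ℤ, eval (evc m) p = 0) : p = 0 := by
  have key : ∀ s : ℕ, ∀ x : Fin n → ℂ, (∀ i : Fin n, s ≤ i.1 → ∃ t : ℤ, x i = (t : ℂ)) →
      eval x p = 0 := by
    intro s
    induction s with
    | zero =>
        intro x hx
        choose t ht using fun i => hx i (Nat.zero_le _)
        have hxe : x = evc t := by
          funext i
          rw [ht i, evc]
          push_cast
          rfl
        rw [hxe]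
        exact h t
    | succ s ih =>
        intro x hx
        by_cases hs : s < n
        · set i : Fin n := ⟨s, hs⟩ with hidef
          have hr : ∀ t : ℤ, (linePoly i x p).eval ((t : ℂ)) = 0 := by
            intro t
            rw [eval_linePoly]
            apply ih
            intro k hk
            by_cases hki : k = i
            · subst hki
              exact ⟨t, by simp⟩
            · rw [Function.update_of_ne hki]
              apply hx
              have : k.1 ≠ s := fun hc => hki (Fin.ext (by rw [hc, hidef]))
              omega
          have hline : linePoly i x p = 0 := by
            apply Polynomial.eq_zero_of_infinite_isRoot
            apply Set.infinite_of_injective_forall_mem (f := fun t : ℤ => (t : ℂ))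
              (hi := Int.cast_injective)
            intro t
            exact hr t
          have := eval_linePoly i x p (x i)
          rw [hline, Function.update_eq_self] at this
          simpa using this.symm
        · apply ih
          intro k hk
          exact absurd k.isLt (by omega)
  have : ∀ x, eval x p = 0 := fun x => key n x (fun i hi => absurd i.isLt (by omega))
  exact MvPolynomial.funext (fun x => by rw [this x, map_zero])




noncomputable def e1 (z : ℂ) (g : ℤ → ℂ) : ℤ → ℂ := fun m => g (m + 1) - z * g m

noncomputable def e1s (zs : List ℂ) (g : ℤ → ℂ) : ℤ → ℂ := zs.foldr e1 g

lemma e1s_window (zs : List ℂ) (g : ℤ → ℂ) (m : ℤ)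
    (hg : ∀ t : ℤ, m ≤ t → t ≤ m + zs.length → g t = 0) : e1s zs g m = 0 := by
  induction zs generalizing m with
  | nil => exact hg m le_rfl (by simp)
  | cons z zs ih =>
      show e1 z (e1s zs g) m = 0
      rw [e1]
      rw [ih (m + 1) (fun t h1 h2 => hg t (by omega) (by simp at *; omega)),
        ih m (fun t h1 h2 => hg t h1 (by simp at *; omega))]
      ring

lemma prop1 : ∀ zs : List ℂ, (∀ z ∈ zs, z ≠ 0) → ∀ g : ℤ → ℂ,
    (∀ m : ℤ, e1s zs g m = 0) → ∀ a : ℤ, (∀ t : ℤ, a ≤ t → t < a + zs.length → g t = 0) →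
    ∀ m : ℤ, g m = 0 := by
  intro zs
  induction zs with
  | nil => intro _ g hrec a _ m; exact hrec m
  | cons z zs ih =>
      intro hz g hrec a hwin m
      have hzne : z ≠ 0 := hz z List.mem_cons_self
      set H : ℤ → ℂ := e1s zs g with hH
      have hstep : ∀ t : ℤ, H (t + 1) = z * H t := by
        intro t
        have := hrec t
        rw [show e1s (z :: zs) g = e1 z H from rfl, e1] at this
        linear_combination this
      have hHa : H a = 0 := by
        apply e1s_window
        intro t h1 h2
        apply hwin t h1 (by simp at *; omega)
      have hHall : ∀ t : ℤ, H t = 0 := by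
        intro t
        induction t using Int.inductionOn' (b := a) with
        | zero => exact hHa
        | succ k _ ihk => rw [hstep k, ihk, mul_zero]
        | pred k _ ihk =>
            have h5 := hstep (k - 1)
            rw [sub_add_cancel, ihk] at h5
            exact (mul_eq_zero.mp h5.symm).resolve_left hzne
      exact ih (fun w hw => hz w (List.mem_cons_of_mem _ hw)) g hHall a
        (fun t h1 h2 => hwin t h1 (by simp at *; omega)) m

lemma section_EFs (i : Fin n) (zs : List ℂ) (F : (Fin n → ℤ) → ℂ) (m : Fin n → ℤ) (t : ℤ) :
    e1s zs (fun u => F (Function.update m i u)) t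
      = EFs (zs.map (fun z => (i, z))) F (Function.update m i t) := by
  induction zs generalizing t with
  | nil => rfl
  | cons z zs ih =>
      show e1 z (e1s zs fun u => F (Function.update m i u)) t = _
      rw [e1, ih, ih]
      show _ = EF i z (EFs (zs.map fun z => (i, z)) F) (Function.update m i t)
      rw [EF]
      congr 2
      funext k
      by_cases hk : k = i <;> simp [hk, delta, Function.update_apply]

lemma propn (K : ℕ) (F : (Fin n → ℤ) → ℂ) (zs : Fin n → List ℂ)
    (hlen : ∀ i, (zs i).length = K)
    (hne : ∀ i, ∀ z ∈ zs i, z ≠ 0)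
    (hrec : ∀ i : Fin n, ∀ m : Fin n → ℤ, EFs ((zs i).map (fun z => (i, z))) F m = 0)
    (m0 : Fin n → ℤ)
    (hbox : ∀ m : Fin n → ℤ, (∀ i, m0 i ≤ m i ∧ m i < m0 i + K) → F m = 0) :
    ∀ m : Fin n → ℤ, F m = 0 := by
  have key : ∀ s : ℕ, ∀ m : Fin n → ℤ,
      (∀ i : Fin n, s ≤ i.1 → m0 i ≤ m i ∧ m i < m0 i + K) → F m = 0 := by
    intro s
    induction s with
    | zero => intro m hm; exact hbox m (fun i => hm i (Nat.zero_le _))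
    | succ s ih =>
        intro m hm
        by_cases hs : s < n
        · set i : Fin n := ⟨s, hs⟩ with hidef
          set g : ℤ → ℂ := fun u => F (Function.update m i u) with hg
          have hgrec : ∀ t : ℤ, e1s (zs i) g t = 0 := by
            intro t
            rw [hg, section_EFs]
            exact hrec i _
          have hgwin : ∀ t : ℤ, m0 i ≤ t → t < m0 i + (zs i).length → g t = 0 := by
            intro t h1 h2
            rw [hlen i] at h2
            apply ih
            intro k hk
            by_cases hki : k = i
            · subst hki
              rw [Function.update_self]
              exact ⟨h1, h2⟩
            · rw [Function.update_of_ne hki]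
              apply hm
              have : k.1 ≠ s := fun hc => hki (Fin.ext (by rw [hc, hidef]))
              omega
          have h6 := prop1 (zs i) (hne i) g hgrec (m0 i) hgwin (m i)
          change F (Function.update m i (m i)) = 0 at h6
          rwa [Function.update_eq_self] at h6
        · apply ih
          intro k hk
          exact absurd k.isLt (by omega)
  intro m
  exact key n m (fun i hi => absurd i.isLt (by omega))



lemma foldr_replicate {α β : Type*} (f : α → β → β) (a : α) (k : ℕ) (b : β) :
    List.foldr f b (List.replicate k a) = (f a)^[k] b := by
  induction k with
  | zero => rfl
  | succ k ih => rw [List.replicate_succ, List.foldr_cons, ih, Function.iterate_succ_apply']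

lemma EPs_append (ν : Fin n → ℝ) (L1 L2 : List (Fin n × ℂ)) (q : MvPolynomial (Fin n) ℂ) :
    EPs ν (L1 ++ L2) q = EPs ν L1 (EPs ν L2 q) := by
  rw [EPs, EPs, EPs, List.foldr_append]

lemma EPs_zero (ν : Fin n → ℝ) (L : List (Fin n × ℂ)) : EPs ν L 0 = 0 := by
  induction L with
  | nil => rfl
  | cons s L ih => rw [EPs_cons, ih]; simp [EP, shiftP]

lemma totalDegree_EPs_le (ν : Fin n → ℝ) (L : List (Fin n × ℂ)) (q : MvPolynomial (Fin n) ℂ) :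
    (EPs ν L q).totalDegree ≤ q.totalDegree := by
  induction L with
  | nil => exact le_rfl
  | cons s L ih => rw [EPs_cons]; exact le_trans (totalDegree_EP_le _ _ _ _) ih

lemma EPs_replicate_kill (ν : Fin n → ℝ) (i : Fin n) (D : ℕ) (hD : 1 ≤ D)
    (q : MvPolynomial (Fin n) ℂ) (hq : q.totalDegree ≤ D - 1) :
    EPs ν (List.replicate D (i, Complex.exp (Complex.I * (ν i : ℂ)))) q = 0 := by
  rw [EPs, foldr_replicate]
  have : (fun q' => EP (i, Complex.exp (Complex.I * (ν i : ℂ))).1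
      (Complex.exp (Complex.I * (ν (i, Complex.exp (Complex.I * (ν i : ℂ))).1 : ℂ)))
      (i, Complex.exp (Complex.I * (ν i : ℂ))).2 q')
      = EP i (Complex.exp (Complex.I * (ν i : ℂ))) (Complex.exp (Complex.I * (ν i : ℂ))) := rfl
  rw [this]
  have hD' : D = (D - 1) + 1 := by omega
  rw [hD']
  exact EP_kill i _ (D - 1) q hq

lemma EPs_kill_of_mem {ι : Type*} (ν : Fin n → ℝ) (l : List ι) (f : ι → List (Fin n × ℂ))
    (j : ι) (hj : j ∈ l) (q : MvPolynomial (Fin n) ℂ)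
    (hkill : ∀ q' : MvPolynomial (Fin n) ℂ, q'.totalDegree ≤ q.totalDegree →
      EPs ν (f j) q' = 0) :
    EPs ν (l.flatMap f) q = 0 := by
  obtain ⟨l1, l2, rfl⟩ := List.append_of_mem hj
  rw [List.flatMap_append, List.flatMap_cons, EPs_append, EPs_append]
  rw [hkill _ (totalDegree_EPs_le _ _ _), EPs_zero]

lemma EPs_inj (ν : Fin n → ℝ) (L : List (Fin n × ℂ))
    (hL : ∀ s ∈ L, Complex.exp (Complex.I * (ν s.1 : ℂ)) ≠ s.2)
    (q : MvPolynomial (Fin n) ℂ) (hq : EPs ν L q = 0) : q = 0 := by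
  induction L with
  | nil => exact hq
  | cons s L ih =>
      rw [EPs_cons] at hq
      exact ih (fun t ht => hL t (List.mem_cons_of_mem _ ht))
        (EP_inj _ _ _ (hL s List.mem_cons_self) _ hq)

lemma EFs_of_zero (L : List (Fin n × ℂ)) (F : (Fin n → ℤ) → ℂ) (hF : ∀ m, F m = 0) :
    ∀ m, EFs L F m = 0 := by
  induction L with
  | nil => exact hF
  | cons s L ih =>
      intro m
      show EF s.1 s.2 (EFs L F) m = 0
      rw [EF, ih, ih, mul_zero, sub_zero]

lemma box_in_cone (C : Set (Fin n → ℝ)) (hCopen : IsOpen C) (hCne : C.Nonempty)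
    (hCcone : ∀ x ∈ C, ∀ t : ℝ, 0 < t → t • x ∈ C) (K : ℕ) :
    ∃ m0 : Fin n → ℤ, ∀ m : Fin n → ℤ,
      (∀ i, m0 i ≤ m i ∧ m i < m0 i + (K : ℤ)) → (fun i => (m i : ℝ)) ∈ C := by
  obtain ⟨x, hx⟩ := hCne
  obtain ⟨ε, hε, hball⟩ := Metric.isOpen_iff.mp hCopen x hx
  set t : ℝ := (K + 1) / ε with ht
  have htpos : 0 < t := by positivity
  have hsub : Metric.ball (t • x) (K + 1) ⊆ C := by
    intro y hy
    have hw : t⁻¹ • y ∈ Metric.ball x ε := by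
      rw [Metric.mem_ball] at hy ⊢
      have : dist (t⁻¹ • y) (t⁻¹ • (t • x)) = |t⁻¹| * dist y (t • x) := by
        rw [dist_smul₀, Real.norm_eq_abs]
      rw [inv_smul_smul₀ (ne_of_gt htpos)] at this
      rw [this, abs_of_pos (by positivity)]
      calc t⁻¹ * dist y (t • x) < t⁻¹ * (K + 1) := by
            apply mul_lt_mul_of_pos_left hy (by positivity)
        _ = ε := by rw [ht]; field_simp
    have := hCcone _ (hball hw) t htpos
    rwa [smul_inv_smul₀ (ne_of_gt htpos)] at this
  refine ⟨fun i => ⌈t * x i⌉, fun m hm => ?_⟩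
  apply hsub
  rw [Metric.mem_ball]
  rw [dist_pi_lt_iff (by positivity)]
  intro i
  have h1 := Int.le_ceil (t * x i)
  have h2 := Int.ceil_lt_add_one (t * x i)
  have h3 := (hm i).1
  have h4 := (hm i).2
  have h5 : (t • x) i = t * x i := rfl
  rw [h5, Real.dist_eq, abs_lt]
  have h3' : (⌈t * x i⌉ : ℝ) ≤ (m i : ℝ) := by exact_mod_cast h3
  have h4' : (m i : ℝ) < (⌈t * x i⌉ : ℝ) + K := by exact_mod_cast h4
  constructor <;> nlinarith

lemma freq_exists (N : ℕ) (μ : Fin N → (Fin n → ℝ))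
    (hμ : ∀ j l, j ≠ l → ¬ ∃ k : Fin n → ℤ, ∀ i, μ j i - μ l i = 2 * Real.pi * k i)
    (j l : Fin N) (hjl : j ≠ l) :
    ∃ i : Fin n, Complex.exp (Complex.I * (μ j i : ℂ)) ≠ Complex.exp (Complex.I * (μ l i : ℂ)) := by
  by_contra hcon
  push_neg at hcon
  apply hμ j l hjl
  have : ∀ i : Fin n, ∃ t : ℤ, μ j i - μ l i = 2 * Real.pi * t := by
    intro i
    obtain ⟨t, htt⟩ := Complex.exp_eq_exp_iff_exists_int.mp (hcon i)
    refine ⟨t, ?_⟩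
    have h2 : (Complex.I : ℂ) * (μ j i : ℂ) = Complex.I * ((μ l i : ℂ) + t * (2 * Real.pi)) := by
      rw [htt]; ring
    have h3 : ((μ j i : ℝ) : ℂ) = (((μ l i : ℝ) + t * (2 * Real.pi) : ℝ) : ℂ) := by
      have := mul_left_cancel₀ Complex.I_ne_zero h2
      rw [this]
      push_cast
      ring
    have h4 : (μ j i : ℝ) = μ l i + t * (2 * Real.pi) := by exact_mod_cast h3
    rw [h4]; ring
  choose k hk using this
  exact ⟨k, hk⟩

end Stmt3Aux

open Stmt3Aux MvPolynomial in
/-- uniqueness of polynomial-exponential expansions on the lattice points of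
a nonempty open convex cone in `ℝ^n`: if a finite sum `∑ j, exp(i⟨μ j, T⟩) p j (T)` with
frequencies pairwise distinct modulo `2πℤ^n` vanishes on `ℤ^n ∩ C`, then all polynomial
coefficients vanish. -/
theorem stmt3 {n : ℕ} (hn : 1 ≤ n) {N : ℕ}
    (C : Set (Fin n → ℝ)) (hCopen : IsOpen C) (hCconv : Convex ℝ C) (hCne : C.Nonempty)
    (hCcone : ∀ x ∈ C, ∀ t : ℝ, 0 < t → t • x ∈ C)
    (μ : Fin N → (Fin n → ℝ))
    (hμ : ∀ j l, j ≠ l → ¬ ∃ k : Fin n → ℤ, ∀ i, μ j i - μ l i = 2 * Real.pi * k i)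
    (p : Fin N → MvPolynomial (Fin n) ℂ)
    (h : ∀ m : Fin n → ℤ, (fun i => (m i : ℝ)) ∈ C →
      ∑ j, Complex.exp (Complex.I * ((∑ i, μ j i * (m i : ℝ) : ℝ) : ℂ)) *
        MvPolynomial.eval (fun i => ((m i : ℝ) : ℂ)) (p j) = 0) :
    ∀ j, p j = 0 := by
  classical
  rcases Nat.eq_zero_or_pos N with hN | hN
  · intro j; exact absurd j.isLt (by omega)
  intro j₀
  set D : ℕ := (Finset.univ.sup fun j => (p j).totalDegree) + 1 with hD
  have hDdeg : ∀ j, (p j).totalDegree ≤ D - 1 := by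
    intro j
    have h1 : (p j).totalDegree ≤ Finset.univ.sup fun j => (p j).totalDegree :=
      Finset.le_sup (f := fun j => (p j).totalDegree) (Finset.mem_univ j)
    omega
  have hD1 : 1 ≤ D := by omega
  set F : (Fin n → ℤ) → ℂ := fun m => ∑ j, chi (μ j) m * eval (evc m) (p j) with hF
  set zs : Fin n → List ℂ := fun i =>
    (List.finRange N).flatMap
      (fun j => List.replicate D (Complex.exp (Complex.I * (μ j i : ℂ)))) with hzs
  have hlen : ∀ i, (zs i).length = N * D := by
    intro i
    rw [hzs]
    simp [List.length_flatMap, Function.comp_def, List.map_const', List.sum_replicate, smul_eq_mul, mul_comm]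
  have hne : ∀ i, ∀ z ∈ zs i, z ≠ 0 := by
    intro i z hz
    rw [hzs] at hz
    simp only [List.mem_flatMap, List.mem_replicate] at hz
    obtain ⟨j, _, _, rfl⟩ := hz
    exact Complex.exp_ne_zero _
  have hrec : ∀ i : Fin n, ∀ m : Fin n → ℤ, EFs ((zs i).map (fun z => (i, z))) F m = 0 := by
    intro i m
    have hmap : (zs i).map (fun z => (i, z)) = (List.finRange N).flatMap
        (fun j => List.replicate D (i, Complex.exp (Complex.I * (μ j i : ℂ)))) := by
      rw [hzs, List.map_flatMap]
      simp [List.map_replicate]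
    rw [hmap, hF, EFs_sum]
    apply Finset.sum_eq_zero
    intro j _
    rw [EFs_char]
    have hzero : EPs (μ j) ((List.finRange N).flatMap
        (fun j' => List.replicate D (i, Complex.exp (Complex.I * (μ j' i : ℂ))))) (p j) = 0 :=
      EPs_kill_of_mem (μ j) (List.finRange N) _ j (List.mem_finRange j) (p j)
        (fun q' hq' => EPs_replicate_kill (μ j) i D hD1 q' (le_trans hq' (hDdeg j)))
    rw [hzero, map_zero, mul_zero]
  obtain ⟨m0, hm0⟩ := box_in_cone C hCopen hCne hCcone (N * D)
  have hbox : ∀ m : Fin n → ℤ, (∀ i, m0 i ≤ m i ∧ m i < m0 i + (N * D : ℕ)) → F m = 0 := by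
    intro m hm
    exact h m (hm0 m hm)
  have hFzero : ∀ m, F m = 0 := propn (N * D) F zs hlen hne hrec m0 hbox
  -- now kill all terms except j₀
  have hch : ∀ j : Fin N, ∃ i : Fin n, j ≠ j₀ →
      Complex.exp (Complex.I * (μ j₀ i : ℂ)) ≠ Complex.exp (Complex.I * (μ j i : ℂ)) := by
    intro j
    by_cases hj : j = j₀
    · exact ⟨⟨0, hn⟩, fun hcon => absurd hj hcon⟩
    · obtain ⟨i, hi⟩ := freq_exists N μ hμ j₀ j (Ne.symm hj)
      exact ⟨i, fun _ => hi⟩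
  choose ii hii using hch
  set l : List (Fin N) := (List.finRange N).filter (fun j => j ≠ j₀) with hl
  set steps : List (Fin n × ℂ) :=
    l.flatMap (fun j => List.replicate D (ii j, Complex.exp (Complex.I * (μ j (ii j) : ℂ))))
    with hsteps
  have hEFs : ∀ m, EFs steps F m = 0 := EFs_of_zero steps F hFzero
  have hterm : ∀ m, chi (μ j₀) m * eval (evc m) (EPs (μ j₀) steps (p j₀)) = 0 := by
    intro m
    have h1 := hEFs m
    rw [hF, EFs_sum] at h1
    have h2 : ∀ j ∈ Finset.univ, j ≠ j₀ →
        EFs steps (fun m' => chi (μ j) m' * eval (evc m') (p j)) m = 0 := by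
      intro j _ hj
      rw [EFs_char]
      have hmem : j ∈ l := by
        rw [hl, List.mem_filter]
        exact ⟨List.mem_finRange j, by simpa using hj⟩
      have hzero : EPs (μ j) steps (p j) = 0 := by
        rw [hsteps]
        exact EPs_kill_of_mem (μ j) l _ j hmem (p j)
          (fun q' hq' => EPs_replicate_kill (μ j) (ii j) D hD1 q' (le_trans hq' (hDdeg j)))
      rw [hzero, map_zero, mul_zero]
    rw [Finset.sum_eq_single_of_mem j₀ (Finset.mem_univ j₀) h2] at h1
    rw [EFs_char] at h1
    exact h1
  have hq0 : EPs (μ j₀) steps (p j₀) = 0 := by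
    apply vanish_lattice
    intro m
    exact (mul_eq_zero.mp (hterm m)).resolve_left (Complex.exp_ne_zero _)
  apply EPs_inj (μ j₀) steps _ (p j₀) hq0
  intro s hs
  rw [hsteps, List.mem_flatMap] at hs
  obtain ⟨j, hjl, hsrep⟩ := hs
  rw [List.mem_replicate] at hsrep
  have hjne : j ≠ j₀ := by
    rw [hl, List.mem_filter] at hjl
    simpa using hjl.2
  rw [hsrep.2]
  exact hii j hjne
end

section
/- Let E be a finite-dimensional real inner product space, let w : E → E be a linear isometry, let K ⊆ E be a linear subspace with orthogonal projection p : E → E, and let C_1 ⊆ K and C_2 ⊆ E be closed subsets stable under multiplication by nonnegative real numbers. Assume that ⟨u, v⟩ ≥ 0 for all u ∈ C_1 and v ∈ C_2, and that the only u ∈ C_1 with w(u) = u is u = 0. Then there exists c > 0 such that ‖u‖ + ‖v‖ ≤ c · ‖u − p(w(u)) + v‖ for all u ∈ C_1 and v ∈ C_2. -/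
/-- quantitative version of claim (2) in the proof of Lemma 3.5 of the
paper. Given closed cones `C₁ ⊆ K` and `C₂` with pairwise nonnegative inner products,
and a linear isometry `w` fixing no nonzero element of `C₁`, one has
`‖u‖ + ‖v‖ ≤ c ‖u - P_K(w u) + v‖` for some `c > 0`. -/
theorem stmt6 {E : Type*} [NormedAddCommGroup E] [InnerProductSpace ℝ E]
    [FiniteDimensional ℝ E]
    (w : E →ₗᵢ[ℝ] E) (K : Submodule ℝ E)
    (C₁ C₂ : Set E) (hC₁K : C₁ ⊆ (K : Set E))
    (hC₁closed : IsClosed C₁) (hC₂closed : IsClosed C₂)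
    (hC₁cone : ∀ u ∈ C₁, ∀ t : ℝ, 0 ≤ t → t • u ∈ C₁)
    (hC₂cone : ∀ v ∈ C₂, ∀ t : ℝ, 0 ≤ t → t • v ∈ C₂)
    (hinner : ∀ u ∈ C₁, ∀ v ∈ C₂, 0 ≤ (inner ℝ u v : ℝ))
    (hfix : ∀ u ∈ C₁, w u = u → u = 0) :
    ∃ c > 0, ∀ u ∈ C₁, ∀ v ∈ C₂,
      ‖u‖ + ‖v‖ ≤ c * ‖u - (K.orthogonalProjection (w u) : E) + v‖ := by
  classical
  set p : E → E := fun x => (K.orthogonalProjection (w x) : E) with hp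
  have hpsmul : ∀ (t : ℝ) (x : E), p (t • x) = t • p x := by
    intro t x
    simp [hp, map_smul]
  have hpcont : Continuous p := by
    exact continuous_subtype_val.comp ((K.orthogonalProjection).continuous.comp w.continuous)
  have hcont : Continuous fun x : E × E => ‖x.1 - p x.1 + x.2‖ := by
    exact ((continuous_fst.sub (hpcont.comp continuous_fst)).add continuous_snd).norm
  -- key positivity fact
  have key : ∀ u ∈ C₁, ∀ v ∈ C₂, u - p u + v = 0 → u = 0 ∧ v = 0 := by
    intro u hu v hv h0
    have huK : u ∈ K := hC₁K hu
    have h1 : (inner ℝ (w u - p u) u : ℝ) = 0 :=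
      K.starProjection_inner_eq_zero (w u) u huK
    have h2 : (inner ℝ (p u) u : ℝ) = inner ℝ (w u) u := by
      rw [inner_sub_left] at h1; linarith
    have h0' : p u = u + v := by
      have h : u + v - p u = 0 := by rw [← h0]; abel
      rw [sub_eq_zero] at h; exact h.symm
    have h3 : (inner ℝ (w u) u : ℝ) = ‖u‖ ^ 2 + inner ℝ v u := by
      rw [← h2, h0', inner_add_left, real_inner_self_eq_norm_sq]
    have hvu : (0:ℝ) ≤ inner ℝ v u := by
      rw [real_inner_comm]; exact hinner u hu v hv
    have hnsq : ‖w u - u‖ ^ 2 ≤ 0 := by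
      have hns := norm_sub_sq_real (w u) u
      have hwn : ‖w u‖ = ‖u‖ := w.norm_map u
      rw [hwn] at hns
      linarith
    have hwu : w u = u := by
      have h4 : ‖w u - u‖ ^ 2 = 0 := le_antisymm hnsq (sq_nonneg _)
      have h5 : ‖w u - u‖ = 0 := by
        have := pow_eq_zero_iff (n := 2) (by norm_num) |>.mp h4
        exact this
      exact sub_eq_zero.mp (norm_eq_zero.mp h5)
    have hu0 : u = 0 := hfix u hu hwu
    refine ⟨hu0, ?_⟩
    rw [hu0] at h0'
    have hpz : p (0:E) = 0 := by simp [hp]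
    rw [hpz] at h0'
    simpa using h0'.symm
  set S : Set (E × E) := {x | x.1 ∈ C₁ ∧ x.2 ∈ C₂ ∧ ‖x.1‖ + ‖x.2‖ = 1} with hS
  have hSclosed : IsClosed S := by
    have h1 : IsClosed {x : E × E | x.1 ∈ C₁} := hC₁closed.preimage continuous_fst
    have h2 : IsClosed {x : E × E | x.2 ∈ C₂} := hC₂closed.preimage continuous_snd
    have h3 : IsClosed {x : E × E | ‖x.1‖ + ‖x.2‖ = 1} :=
      isClosed_eq (continuous_fst.norm.add continuous_snd.norm) continuous_const
    exact h1.inter (h2.inter h3)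
  have hSsub : S ⊆ Metric.closedBall 0 1 := by
    rintro ⟨u, v⟩ ⟨hu, hv, hn⟩
    simp only [Metric.mem_closedBall, dist_zero_right, Prod.norm_def]
    have h1 : ‖u‖ ≤ 1 := by have := norm_nonneg v; simp at hn ⊢; linarith
    have h2 : ‖v‖ ≤ 1 := by have := norm_nonneg u; simp at hn ⊢; linarith
    exact max_le h1 h2
  have hScompact : IsCompact S :=
    (isCompact_closedBall (0 : E × E) 1).of_isClosed_subset hSclosed hSsub
  by_cases hne : S.Nonempty
  · obtain ⟨x₀, hx₀, hmin⟩ := hScompact.exists_isMinOn hne hcont.continuousOn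
    set m := ‖x₀.1 - p x₀.1 + x₀.2‖ with hm
    have hmpos : 0 < m := by
      obtain ⟨h1, h2, h3⟩ := hx₀
      rcases (norm_nonneg (x₀.1 - p x₀.1 + x₀.2)).lt_or_eq with h | h
      · exact h
      · exfalso
        obtain ⟨hz1, hz2⟩ := key x₀.1 h1 x₀.2 h2 (norm_eq_zero.mp h.symm)
        rw [hz1, hz2] at h3
        simp at h3
    refine ⟨m⁻¹, inv_pos.mpr hmpos, ?_⟩
    intro u hu v hv
    rcases (by positivity : (0:ℝ) ≤ ‖u‖ + ‖v‖).lt_or_eq with h | h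
    · have hsin : ((‖u‖ + ‖v‖)⁻¹ • u, (‖u‖ + ‖v‖)⁻¹ • v) ∈ S := by
        refine ⟨hC₁cone u hu _ (by positivity), hC₂cone v hv _ (by positivity), ?_⟩
        simp only [norm_smul, Real.norm_eq_abs, abs_of_pos (inv_pos.mpr h)]
        rw [← mul_add, inv_mul_cancel₀ h.ne']
      have hle : m ≤ ‖(‖u‖ + ‖v‖)⁻¹ • u - p ((‖u‖ + ‖v‖)⁻¹ • u) + (‖u‖ + ‖v‖)⁻¹ • v‖ :=
        hmin hsin
      have heq : ‖(‖u‖ + ‖v‖)⁻¹ • u - p ((‖u‖ + ‖v‖)⁻¹ • u) + (‖u‖ + ‖v‖)⁻¹ • v‖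
          = (‖u‖ + ‖v‖)⁻¹ * ‖u - p u + v‖ := by
        rw [hpsmul, ← smul_sub, ← smul_add, norm_smul, Real.norm_eq_abs,
          abs_of_pos (inv_pos.mpr h)]
      rw [heq] at hle
      have h2 : (‖u‖ + ‖v‖) * m ≤ ‖u - p u + v‖ := by
        have := mul_le_mul_of_nonneg_left hle h.le
        rwa [← mul_assoc, mul_inv_cancel₀ h.ne', one_mul] at this
      show ‖u‖ + ‖v‖ ≤ m⁻¹ * ‖u - p u + v‖
      calc ‖u‖ + ‖v‖ = m⁻¹ * ((‖u‖ + ‖v‖) * m) := by field_simp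
        _ ≤ m⁻¹ * ‖u - p u + v‖ :=
          mul_le_mul_of_nonneg_left h2 (inv_pos.mpr hmpos).le
    · have hu0 : ‖u‖ = 0 := by have := norm_nonneg u; have := norm_nonneg v; linarith
      have hv0 : ‖v‖ = 0 := by have := norm_nonneg u; have := norm_nonneg v; linarith
      rw [hu0, hv0, add_zero]
      positivity
  · refine ⟨1, one_pos, ?_⟩
    intro u hu v hv
    have ht0 : ‖u‖ + ‖v‖ = 0 := by
      by_contra hcon
      have hpos : 0 < ‖u‖ + ‖v‖ := lt_of_le_of_ne (by positivity) (Ne.symm hcon)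
      refine hne ⟨((‖u‖ + ‖v‖)⁻¹ • u, (‖u‖ + ‖v‖)⁻¹ • v),
        hC₁cone u hu _ (by positivity), hC₂cone v hv _ (by positivity), ?_⟩
      simp only [norm_smul, Real.norm_eq_abs, abs_of_pos (inv_pos.mpr hpos)]
      rw [← mul_add, inv_mul_cancel₀ hpos.ne']
    have hrhs : (0:ℝ) ≤ 1 * ‖u - (K.orthogonalProjection (w u) : E) + v‖ := by positivity
    linarith
end

section
/- Let E be a finite-dimensional real inner product space and let W, V_1, V_2, U_1, U_2 be linear subspaces of E with W ⊆ V_1, W ⊆ V_2, U_1 ⊆ V_1 and U_2 ⊆ V_2. Equip E × E with the product inner product, let Δ(W) = {(w, w) : w ∈ W} ⊆ E × E, let P_W : E → W denote the orthogonal projection onto W, and for i = 1, 2 let V_i ∩ U_i^⊥ be the orthogonal complement of U_i inside V_i. Then the following are equivalent: (1) V_1 × V_2 is the direct sum of Δ(W) and U_1 × U_2, i.e. Δ(W) ∩ (U_1 × U_2) = {0} and Δ(W) + (U_1 × U_2) = V_1 × V_2; (2) the linear map (V_1 ∩ U_1^⊥) × (V_2 ∩ U_2^⊥) → W sending (h_1,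 h_2) to P_W(h_1) + P_W(h_2) is a linear isomorphism. -/
open scoped RealInnerProductSpace

/-- If `x ∈ V` is orthogonal to `V ⊓ Uᗮ` where `U ≤ V`, then `x ∈ U` (finite dimensions). -/
private lemma aux_mem_of_orth {E : Type*} [NormedAddCommGroup E] [InnerProductSpace ℝ E]
    [FiniteDimensional ℝ E] (U V : Submodule ℝ E) (hUV : U ≤ V) {x : E} (hxV : x ∈ V)
    (hx : ∀ y ∈ V ⊓ Uᗮ, ⟪y, x⟫ = 0) : x ∈ U := by
  obtain ⟨u, hu, z, hz, hdec⟩ := U.exists_add_mem_mem_orthogonal x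
  have hzV : z ∈ V := by
    have hzx : z = x - u := by rw [hdec]; abel
    rw [hzx]; exact V.sub_mem hxV (hUV hu)
  have h1 : ⟪z, x⟫ = 0 := hx z ⟨hzV, hz⟩
  have h2 : ⟪z, u⟫ = 0 := Submodule.inner_left_of_mem_orthogonal hu hz
  have h3 : ⟪z, z⟫ = 0 := by
    rw [hdec, inner_add_right, h2, zero_add] at h1; exact h1
  have hz0 : z = 0 := inner_self_eq_zero.mp h3
  rw [hdec, hz0, add_zero]; exact hu

/-- The orthogonal projection does not change inner products against members of `W`. -/
private lemma aux_inner_proj {E : Type*} [NormedAddCommGroup E] [InnerProductSpace ℝ E]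
    [FiniteDimensional ℝ E] (W : Submodule ℝ E) (x : E) {w : E} (hw : w ∈ W) :
    ⟪((Submodule.orthogonalProjection W x : ↥W) : E), w⟫ = ⟪x, w⟫ := by
  have h := Submodule.starProjection_inner_eq_zero (K := W) x w hw
  rw [inner_sub_left, Submodule.starProjection_apply] at h
  linarith

/-- A submodule-product is linearly equivalent to the product of the submodules. -/
private def aux_prodSubEquiv {R M N : Type*} [Ring R] [AddCommGroup M] [AddCommGroup N]
    [Module R M] [Module R N] (p : Submodule R M) (q : Submodule R N) :
    ↥(p.prod q) ≃ₗ[R] ↥p × ↥q where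
  toFun x := (⟨x.1.1, x.2.1⟩, ⟨x.1.2, x.2.2⟩)
  invFun x := ⟨(x.1.1, x.2.1), x.1.2, x.2.2⟩
  map_add' _ _ := rfl
  map_smul' _ _ := rfl
  left_inv _ := rfl
  right_inv _ := rfl

/-- equivalence of conditions (1) and (3) of Section 5.3 of the paper.
For subspaces `W ⊆ V₁, V₂` and `U₁ ⊆ V₁`, `U₂ ⊆ V₂` of a finite-dimensional real inner
product space, `V₁ × V₂` is the direct sum of the diagonal `Δ(W)` and `U₁ × U₂` if and
only if `(h₁, h₂) ↦ P_W h₁ + P_W h₂` is an isomorphism from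
`(V₁ ∩ U₁^⊥) × (V₂ ∩ U₂^⊥)` onto `W`. -/
theorem stmt9 {E : Type*} [NormedAddCommGroup E] [InnerProductSpace ℝ E]
    [FiniteDimensional ℝ E]
    (W V₁ V₂ U₁ U₂ : Submodule ℝ E)
    (hWV₁ : W ≤ V₁) (hWV₂ : W ≤ V₂) (hU₁V₁ : U₁ ≤ V₁) (hU₂V₂ : U₂ ≤ V₂) :
    (W.map ((LinearMap.id : E →ₗ[ℝ] E).prod (LinearMap.id : E →ₗ[ℝ] E)) ⊓ U₁.prod U₂ = ⊥ ∧
      W.map ((LinearMap.id : E →ₗ[ℝ] E).prod (LinearMap.id : E →ₗ[ℝ] E)) ⊔ U₁.prod U₂ =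
        V₁.prod V₂) ↔
    Function.Bijective (fun p : ↥(V₁ ⊓ U₁ᗮ) × ↥(V₂ ⊓ U₂ᗮ) =>
      Submodule.orthogonalProjection W (p.1 : E) + Submodule.orthogonalProjection W (p.2 : E)) := by
  classical
  set g : E →ₗ[ℝ] E × E := (LinearMap.id : E →ₗ[ℝ] E).prod LinearMap.id with hg
  set Δ : Submodule ℝ (E × E) := W.map g with hΔdef
  set L : (↥(V₁ ⊓ U₁ᗮ) × ↥(V₂ ⊓ U₂ᗮ)) →ₗ[ℝ] ↥W :=
    ((Submodule.orthogonalProjection W).toLinearMap.comp ((V₁ ⊓ U₁ᗮ).subtype.comp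
      (LinearMap.fst ℝ _ _))) +
    ((Submodule.orthogonalProjection W).toLinearMap.comp ((V₂ ⊓ U₂ᗮ).subtype.comp
      (LinearMap.snd ℝ _ _))) with hL
  have hfun : (fun p : ↥(V₁ ⊓ U₁ᗮ) × ↥(V₂ ⊓ U₂ᗮ) =>
      Submodule.orthogonalProjection W (p.1 : E) + Submodule.orthogonalProjection W (p.2 : E)) = ⇑L := rfl
  rw [hfun]
  have hLapp : ∀ p : ↥(V₁ ⊓ U₁ᗮ) × ↥(V₂ ⊓ U₂ᗮ),
      L p = Submodule.orthogonalProjection W ((p.1 : E)) + Submodule.orthogonalProjection W ((p.2 : E)) :=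
    fun _ => rfl
  constructor
  · rintro ⟨hinf, hsup⟩
    constructor
    · -- injectivity from the sup condition
      have key : ∀ p : ↥(V₁ ⊓ U₁ᗮ) × ↥(V₂ ⊓ U₂ᗮ), L p = 0 → p = 0 := by
        rintro ⟨h₁, h₂⟩ hp0
        have hm : ((h₁ : E), (h₂ : E)) ∈ V₁.prod V₂ := ⟨h₁.2.1, h₂.2.1⟩
        rw [← hsup] at hm
        obtain ⟨a, ha, b, hb, hab⟩ := Submodule.mem_sup.mp hm
        obtain ⟨w, hw, rfl⟩ := Submodule.mem_map.mp ha
        have hb1 : b.1 ∈ U₁ := hb.1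
        have hb2 : b.2 ∈ U₂ := hb.2
        have he1 : (h₁ : E) = w + b.1 := (congrArg Prod.fst hab).symm
        have he2 : (h₂ : E) = w + b.2 := (congrArg Prod.snd hab).symm
        have hcoe0 : ((Submodule.orthogonalProjection W ((h₁ : E)) : ↥W) : E) +
            ((Submodule.orthogonalProjection W ((h₂ : E)) : ↥W) : E) = 0 := by
          have := congrArg (fun z : ↥W => (z : E)) hp0
          simpa [hLapp] using this
        have hPsum : ⟪(h₁ : E), w⟫ + ⟪(h₂ : E), w⟫ = 0 := by
          rw [← aux_inner_proj W ((h₁ : E)) hw, ← aux_inner_proj W ((h₂ : E)) hw,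
            ← inner_add_left, hcoe0, inner_zero_left]
        have hin1 : ⟪(h₁ : E), b.1⟫ = 0 :=
          Submodule.inner_left_of_mem_orthogonal hb1 h₁.2.2
        have hin2 : ⟪(h₂ : E), b.2⟫ = 0 :=
          Submodule.inner_left_of_mem_orthogonal hb2 h₂.2.2
        have hsq : ⟪(h₁ : E), (h₁ : E)⟫ + ⟪(h₂ : E), (h₂ : E)⟫ = 0 := by
          have e1 : ⟪(h₁ : E), (h₁ : E)⟫ = ⟪(h₁ : E), w⟫ + ⟪(h₁ : E), b.1⟫ := by
            rw [← inner_add_right, ← he1]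
          have e2 : ⟪(h₂ : E), (h₂ : E)⟫ = ⟪(h₂ : E), w⟫ + ⟪(h₂ : E), b.2⟫ := by
            rw [← inner_add_right, ← he2]
          rw [e1, e2, hin1, hin2]
          linarith
        have n1 : (0 : ℝ) ≤ ⟪(h₁ : E), (h₁ : E)⟫ := real_inner_self_nonneg
        have n2 : (0 : ℝ) ≤ ⟪(h₂ : E), (h₂ : E)⟫ := real_inner_self_nonneg
        have hq1 : ⟪(h₁ : E), (h₁ : E)⟫ = 0 := by linarith
        have hq2 : ⟪(h₂ : E), (h₂ : E)⟫ = 0 := by linarith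
        have hz1 : (h₁ : E) = 0 := inner_self_eq_zero.mp hq1
        have hz2 : (h₂ : E) = 0 := inner_self_eq_zero.mp hq2
        exact Prod.ext (Subtype.ext hz1) (Subtype.ext hz2)
      intro p q hpq
      have h0 : L (p - q) = 0 := by rw [map_sub, hpq, sub_self]
      exact sub_eq_zero.mp (key (p - q) h0)
    · -- surjectivity from the inf condition
      rw [← LinearMap.range_eq_top, ← Submodule.orthogonal_eq_bot_iff, eq_bot_iff]
      intro w₀ hw₀
      rw [Submodule.mem_orthogonal] at hw₀
      have h1 : (w₀ : E) ∈ U₁ := by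
        apply aux_mem_of_orth U₁ V₁ hU₁V₁ (hWV₁ w₀.2)
        intro y hy
        have h := hw₀ (L (⟨y, hy⟩, 0)) (LinearMap.mem_range.mpr ⟨_, rfl⟩)
        rw [hLapp] at h
        simp only [Submodule.coe_zero, map_zero, add_zero] at h
        rwa [Submodule.inner_orthogonalProjection_eq_of_mem_right] at h
      have h2 : (w₀ : E) ∈ U₂ := by
        apply aux_mem_of_orth U₂ V₂ hU₂V₂ (hWV₂ w₀.2)
        intro y hy
        have h := hw₀ (L (0, ⟨y, hy⟩)) (LinearMap.mem_range.mpr ⟨_, rfl⟩)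
        rw [hLapp] at h
        simp only [Submodule.coe_zero, map_zero, zero_add] at h
        rwa [Submodule.inner_orthogonalProjection_eq_of_mem_right] at h
      have hmem : ((w₀ : E), (w₀ : E)) ∈ Δ ⊓ U₁.prod U₂ :=
        ⟨Submodule.mem_map.mpr ⟨(w₀ : E), w₀.2, rfl⟩, h1, h2⟩
      rw [hinf, Submodule.mem_bot] at hmem
      rw [Submodule.mem_bot]
      exact Subtype.ext (congrArg Prod.fst hmem)
  · intro hbij
    have hginj : Function.Injective g := fun a b h => congrArg Prod.fst h
    have hinf : Δ ⊓ U₁.prod U₂ = ⊥ := by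
      rw [eq_bot_iff]
      rintro ⟨x₁, x₂⟩ ⟨hxΔ, hxU⟩
      obtain ⟨w, hw, hgw⟩ := Submodule.mem_map.mp hxΔ
      have hx1 : w = x₁ := congrArg Prod.fst hgw
      have hx2 : w = x₂ := congrArg Prod.snd hgw
      have hwu1 : w ∈ U₁ := hx1 ▸ hxU.1
      have hwu2 : w ∈ U₂ := hx2 ▸ hxU.2
      obtain ⟨p, hp⟩ := hbij.2 ⟨w, hw⟩
      have hcoe : ((Submodule.orthogonalProjection W ((p.1 : E)) : ↥W) : E) +
          ((Submodule.orthogonalProjection W ((p.2 : E)) : ↥W) : E) = w := by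
        have := congrArg (fun z : ↥W => (z : E)) hp
        simpa [hLapp] using this
      have hzero : ⟪w, w⟫ = 0 := by
        have hs : ⟪((p.1 : E)), w⟫ + ⟪((p.2 : E)), w⟫ = ⟪w, w⟫ := by
          rw [← aux_inner_proj W ((p.1 : E)) hw, ← aux_inner_proj W ((p.2 : E)) hw,
            ← inner_add_left, hcoe]
        rw [← hs, Submodule.inner_left_of_mem_orthogonal hwu1 p.1.2.2,
          Submodule.inner_left_of_mem_orthogonal hwu2 p.2.2.2, add_zero]
      have hw0 : w = 0 := inner_self_eq_zero.mp hzero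
      rw [Submodule.mem_bot]
      exact Prod.ext (hx1 ▸ hw0) (hx2 ▸ hw0)
    refine ⟨hinf, ?_⟩
    -- dimension count
    have e := LinearEquiv.ofBijective L hbij
    have hdim : Module.finrank ℝ ↥(V₁ ⊓ U₁ᗮ) + Module.finrank ℝ ↥(V₂ ⊓ U₂ᗮ) =
        Module.finrank ℝ ↥W := by
      have := e.finrank_eq
      rwa [Module.finrank_prod] at this
    have hd1 : Module.finrank ℝ ↥U₁ + Module.finrank ℝ ↥(U₁ᗮ ⊓ V₁) = Module.finrank ℝ ↥V₁ :=
      Submodule.finrank_add_inf_finrank_orthogonal hU₁V₁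
    have hd2 : Module.finrank ℝ ↥U₂ + Module.finrank ℝ ↥(U₂ᗮ ⊓ V₂) = Module.finrank ℝ ↥V₂ :=
      Submodule.finrank_add_inf_finrank_orthogonal hU₂V₂
    rw [inf_comm] at hd1 hd2
    have hΔW : Module.finrank ℝ ↥Δ = Module.finrank ℝ ↥W :=
      (Submodule.equivMapOfInjective g hginj W).finrank_eq.symm
    have hprodU : Module.finrank ℝ ↥(U₁.prod U₂) =
        Module.finrank ℝ ↥U₁ + Module.finrank ℝ ↥U₂ := by
      rw [(aux_prodSubEquiv U₁ U₂).finrank_eq, Module.finrank_prod]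
    have hprodV : Module.finrank ℝ ↥(V₁.prod V₂) =
        Module.finrank ℝ ↥V₁ + Module.finrank ℝ ↥V₂ := by
      rw [(aux_prodSubEquiv V₁ V₂).finrank_eq, Module.finrank_prod]
    have hle : Δ ⊔ U₁.prod U₂ ≤ V₁.prod V₂ := by
      apply sup_le
      · rintro x hx
        obtain ⟨w, hw, rfl⟩ := Submodule.mem_map.mp hx
        exact ⟨hWV₁ hw, hWV₂ hw⟩
      · exact fun x hx => ⟨hU₁V₁ hx.1, hU₂V₂ hx.2⟩
    have hsum := Submodule.finrank_sup_add_finrank_inf_eq Δ (U₁.prod U₂)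
    rw [hinf, finrank_bot, add_zero] at hsum
    apply Submodule.eq_of_le_of_finrank_eq hle
    rw [hsum, hΔW, hprodU, hprodV]
    omega
end
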